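/- Suppose A is a positive continuous function tending to 0 at ±∞ and S' is continuous. Then the condition 'there exists ε > 0 with |det(p(x,ξ) − λI)| ≥ ε for all (x,ξ) ∈ ℝ²' fails if and only if either Im λ = 0, or Im λ ≠ 0 and there exists x₀ ∈ ℝ with Re λ = −S'(x₀)/2 and |Im λ| ≤ A(x₀). -/

import Mathlib

open Complex Filter Topology

lemma Ere' (r a ξ : ℝ) (lam : ℂ) :
    (-(ξ : ℂ)^2 + ((r : ℝ) + lam)^2 + ((a : ℝ) : ℂ)^2).re
      = -ξ^2 + (r + lam.re)^2 - lam.im^2 + a^2 := by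
  simp [pow_two, Complex.add_re, Complex.mul_re, Complex.add_im, Complex.mul_im]
  ring

lemma Eim' (r a ξ : ℝ) (lam : ℂ) :
    (-(ξ : ℂ)^2 + ((r : ℝ) + lam)^2 + ((a : ℝ) : ℂ)^2).im
      = 2 * (r + lam.re) * lam.im := by
  simp [pow_two, Complex.add_re, Complex.mul_re, Complex.add_im, Complex.mul_im]
  ring

theorem stmt_13 (A S : ℝ → ℝ)
    (hAcont : Continuous A) (hApos : ∀ x, 0 < A x)
    (hAdecay : Tendsto A (cocompact ℝ) (𝓝 0))
    (hS'cont : Continuous (deriv S)) (MS : ℝ) (hMS : ∀ x, |deriv S x| ≤ MS) (lam : ℂ) :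
    ¬(∃ ε : ℝ, 0 < ε ∧ ∀ x ξ : ℝ,
        ε ≤ ‖(-(ξ : ℂ)^2 + ((deriv S x / 2 : ℝ) + lam)^2 + ((A x : ℝ) : ℂ)^2)‖)
      ↔ (lam.im = 0 ∨ (lam.im ≠ 0 ∧ ∃ x₀ : ℝ,
          lam.re = -(deriv S x₀) / 2 ∧ |lam.im| ≤ A x₀)) := by
  set b := lam.im with hbdef
  constructor
  · -- forward direction, by contradiction
    intro hno
    by_contra hcon
    push_neg at hcon
    obtain ⟨hb, hforall⟩ := hcon
    have hforall' : ∀ x : ℝ, lam.re = -(deriv S x) / 2 → A x < |b| := fun x hx =>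
      hforall hb x hx
    apply hno
    have hb2 : 0 < b ^ 2 := by positivity
    set c : ℝ → ℝ := fun x => deriv S x / 2 + lam.re with hcdef
    set φ : ℝ → ℝ := fun x => max (2 * |b| * |c x|) (b ^ 2 - (c x) ^ 2 - (A x) ^ 2)
      with hφdef
    have hφcont : Continuous φ := by
      apply Continuous.max
      · exact continuous_const.mul ((hS'cont.div_const 2).add continuous_const).abs
      · exact (continuous_const.sub
          (((hS'cont.div_const 2).add continuous_const).pow 2)).sub (hAcont.pow 2)
    have hφpos : ∀ x, 0 < φ x := by
      intro x
      rcases eq_or_ne (c x) 0 with hc | hc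
      · have hre : lam.re = -(deriv S x) / 2 := by
          have := hc; simp only [hcdef] at this; linarith
        have hA := hforall' x hre
        have hA0 := (hApos x).le
        have : 0 < b ^ 2 - (c x) ^ 2 - (A x) ^ 2 := by
          rw [hc]
          nlinarith [_root_.sq_abs b]
        exact lt_max_of_lt_right this
      · have : 0 < 2 * |b| * |c x| := by positivity
        exact lt_max_of_lt_left this
    -- pointwise bound: φ x ≤ |E|
    have hpt : ∀ x ξ : ℝ, φ x ≤ ‖
        (-(ξ : ℂ)^2 + ((deriv S x / 2 : ℝ) + lam)^2 + ((A x : ℝ) : ℂ)^2)‖ := by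
      intro x ξ
      set E := -(ξ : ℂ)^2 + ((deriv S x / 2 : ℝ) + lam)^2 + ((A x : ℝ) : ℂ)^2 with hE
      have hre := Ere' (deriv S x / 2) (A x) ξ lam
      have him := Eim' (deriv S x / 2) (A x) ξ lam
      apply max_le
      · have h1 : |E.im| ≤ ‖E‖ := Complex.abs_im_le_norm E
        have : |E.im| = 2 * |b| * |c x| := by
          rw [him, abs_mul, abs_mul]
          simp [hcdef, hbdef, _root_.abs_of_nonneg, mul_comm, mul_assoc, mul_left_comm]
        linarith
      · have h1 : |E.re| ≤ ‖E‖ := Complex.abs_re_le_norm E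
        have h2 : -E.re ≤ |E.re| := neg_le_abs _
        have h3 : b ^ 2 - (c x) ^ 2 - (A x) ^ 2 ≤ -E.re := by
          rw [hre]
          have : 0 ≤ ξ ^ 2 := sq_nonneg ξ
          simp only [hcdef]
          nlinarith
        linarith
    -- compact set outside which A is small
    have hsmall : {x : ℝ | A x < |b| / 2} ∈ cocompact ℝ := by
      have : Set.Iio (|b| / 2) ∈ 𝓝 (0 : ℝ) := Iio_mem_nhds (by positivity)
      exact hAdecay this
    obtain ⟨K, hKc, hKsub⟩ := Filter.mem_cocompact.mp hsmall
    -- outside K, φ ≥ b^2/2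
    have hout : ∀ x ∉ K, b ^ 2 / 2 ≤ φ x := by
      intro x hx
      have hAx : A x < |b| / 2 := hKsub hx
      rcases le_or_gt (|b| / 2) (|c x|) with hcx | hcx
      · refine le_trans ?_ (le_max_left _ _)
        nlinarith [_root_.sq_abs b, abs_nonneg b]
      · refine le_trans ?_ (le_max_right _ _)
        obtain ⟨h1a, h1b⟩ := abs_lt.mp hcx
        have hb4 : (|b| / 2) ^ 2 = b ^ 2 / 4 := by
          rw [div_pow, _root_.sq_abs]; norm_num
        have h1 : (c x) ^ 2 < (|b| / 2) ^ 2 := sq_lt_sq' h1a h1b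
        have h2 : (A x) ^ 2 < (|b| / 2) ^ 2 :=
          sq_lt_sq' (by nlinarith [abs_nonneg b, hApos x]) hAx
        linarith
    -- min of φ on insert 0 K
    have hK' : IsCompact (insert (0:ℝ) K) := hKc.insert 0
    obtain ⟨x₀, hx₀mem, hx₀min⟩ := hK'.exists_isMinOn (Set.insert_nonempty _ _)
      hφcont.continuousOn
    refine ⟨min (φ x₀) (b ^ 2 / 2), lt_min (hφpos x₀) (by positivity), ?_⟩
    intro x ξ
    refine le_trans ?_ (hpt x ξ)
    by_cases hx : x ∈ K
    · exact le_trans (min_le_left _ _) (hx₀min (Set.mem_insert_of_mem _ hx))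
    · exact le_trans (min_le_right _ _) (hout x hx)
  · -- reverse direction
    rintro h ⟨ε, hε, hbound⟩
    obtain him | ⟨him, x₀, hre, hA⟩ := h
    · have him' : lam.im = 0 := hbdef ▸ him
      set r := deriv S 0 / 2 with hr
      set ξ := Real.sqrt ((r + lam.re) ^ 2 + (A 0) ^ 2) with hξ
      have hξ2 : ξ ^ 2 = (r + lam.re) ^ 2 + (A 0) ^ 2 :=
        Real.sq_sqrt (by positivity)
      have hzero : (-(ξ : ℂ)^2 + ((deriv S 0 / 2 : ℝ) + lam)^2 + ((A 0 : ℝ) : ℂ)^2) = 0 := by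
        apply Complex.ext
        · rw [Ere']
          simp only [Complex.zero_re, him', ← hr]
          nlinarith [hξ2]
        · rw [Eim']
          simp [him']
      have := hbound 0 ξ
      rw [hzero] at this
      simp at this
      linarith
    · set ξ := Real.sqrt ((A x₀) ^ 2 - b ^ 2) with hξ
      have hb2 : b ^ 2 ≤ (A x₀) ^ 2 := by
        nlinarith [_root_.sq_abs b, abs_nonneg b, (hApos x₀).le]
      have hξ2 : ξ ^ 2 = (A x₀) ^ 2 - b ^ 2 := Real.sq_sqrt (by linarith)
      have hc0 : deriv S x₀ / 2 + lam.re = 0 := by rw [hre]; ring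
      have hzero : (-(ξ : ℂ)^2 + ((deriv S x₀ / 2 : ℝ) + lam)^2 + ((A x₀ : ℝ) : ℂ)^2) = 0 := by
        apply Complex.ext
        · rw [Ere', hc0]
          simp only [Complex.zero_re, ← hbdef]
          linarith
        · rw [Eim', hc0]
          simp
      have := hbound x₀ ξ
      rw [hzero] at this
      simp at this
      linarith
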